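/- arXiv:2002.09524 — 6 statements merged into one kernel-verified Lean document; each statement's English description precedes it below -/
import Mathlib

section
/- Let O be an invertible t×t matrix over F_2 that has a column of Hamming weight r, where r is even. Then the probability that O preserves the Hamming weight of a uniformly random vector y ∈ F_2^t is at most 1/2. -/
open Finset

lemma cast_hammingNorm (t : ℕ) (x : Fin t → ZMod 2) :
    ((hammingNorm x : ℕ) : ZMod 2) = ∑ i, x i := by
  have h1 : ∀ a : ZMod 2, a ≠ 0 → a = 1 := by decide
  rw [hammingNorm]
  rw [Finset.card_eq_sum_ones, Nat.cast_sum]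
  rw [Finset.sum_filter]
  congr 1
  ext i
  by_cases h : x i ≠ 0
  · simp [h, h1 _ h]
  · simp at h; simp [h]

/-- If an invertible matrix `O` over `F₂` has a column of even Hamming weight `r`,
then the probability (over uniform `y ∈ F₂^t`) that `O` preserves the Hamming
weight of `y` is at most `1/2`. -/
theorem stmt_0 (t r : ℕ) (O : Matrix (Fin t) (Fin t) (ZMod 2))
    (hO : IsUnit O) (j : Fin t)
    (hcol : hammingNorm (fun i => O i j) = r) (hr : Even r) :
    ((univ.filter (fun y : Fin t → ZMod 2 =>
        hammingNorm (O.mulVec y) = hammingNorm y)).card : ℚ) / 2 ^ t ≤ 1 / 2 := by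
  set S := univ.filter (fun y : Fin t → ZMod 2 =>
      hammingNorm (O.mulVec y) = hammingNorm y) with hS
  set e : Fin t → ZMod 2 := Pi.single j 1 with he
  -- the key parity fact
  have key : ∀ y, y ∈ S → y + e ∉ S := by
    intro y hy hye
    simp only [hS, Finset.mem_filter] at hy hye
    have h1 : ((hammingNorm (O.mulVec y) : ℕ) : ZMod 2) = (hammingNorm y : ℕ) := by
      rw [hy.2]
    have h2 : ((hammingNorm (O.mulVec (y + e)) : ℕ) : ZMod 2)
        = (hammingNorm (y + e) : ℕ) := by rw [hye.2]
    have hcol2 : ((r : ℕ) : ZMod 2) = 0 := by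
      obtain ⟨k, hk⟩ := hr
      simp [hk, Nat.cast_add, CharTwo.add_self_eq_zero]
    have hOe : O.mulVec e = fun i => O i j := by
      funext i
      simp [he, Matrix.mulVec_single]
    rw [cast_hammingNorm, cast_hammingNorm] at h1 h2
    have hsum_e : ∑ i, e i = 1 := by simp [he]
    have hmul : O.mulVec (y + e) = O.mulVec y + O.mulVec e := by
      rw [Matrix.mulVec_add]
    rw [hmul, hOe] at h2
    have hsum_col : ∑ i, ((O.mulVec y) + fun i => O i j) i
        = (∑ i, O.mulVec y i) + ∑ i, O i j := by
      simp [Finset.sum_add_distrib]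
    have hcolsum : (∑ i, O i j) = 0 := by
      have := cast_hammingNorm t (fun i => O i j)
      rw [hcol] at this
      rw [← this, hcol2]
    have hsum_ye : ∑ i, (y + e) i = (∑ i, y i) + 1 := by
      simp [Finset.sum_add_distrib, hsum_e]
    rw [hsum_col, hcolsum, hsum_ye, add_zero, h1] at h2
    simp [left_eq_add] at h2
  -- the involution argument
  have hdisj : Disjoint S (S.image (fun y => y + e)) := by
    rw [Finset.disjoint_right]
    intro x hx hxS
    obtain ⟨y, hy, rfl⟩ := Finset.mem_image.mp hx
    exact key y hy hxS
  have hinj : Set.InjOn (fun y : Fin t → ZMod 2 => y + e) S := by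
    intro a _ b _ hab
    simpa using congrArg (fun z => z + e) hab
  have hcard_img : (S.image (fun y => y + e)).card = S.card :=
    Finset.card_image_of_injOn hinj
  have hunion : (S ∪ S.image (fun y => y + e)).card = 2 * S.card := by
    rw [Finset.card_union_of_disjoint hdisj, hcard_img]; ring
  have hle : 2 * S.card ≤ 2 ^ t := by
    rw [← hunion]
    calc (S ∪ S.image (fun y => y + e)).card
        ≤ (univ : Finset (Fin t → ZMod 2)).card := Finset.card_le_card (Finset.subset_univ _)
      _ = 2 ^ t := by simp [Fintype.card_fun]
  have h2t : (0 : ℚ) < 2 ^ t := by positivity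
  rw [div_le_div_iff₀ h2t (by norm_num)]
  have : (2 * S.card : ℚ) ≤ 2 ^ t := by exact_mod_cast hle
  linarith
end

section
/- Let O be an invertible t×t matrix over F_2 that has a column of Hamming weight r, where r is odd. Then the probability over uniformly random y ∈ F_2^t that h(Oy) = h(y) is at most 1/2 + 2^{-(r+1)} * binomial(r+1, (r+1)/2). -/
open Finset

lemma zmod2_cases : ∀ a : ZMod 2, a = 0 ∨ a = 1 := by decide

lemma weight_add {t : ℕ} (z c : Fin t → ZMod 2) :
    hammingNorm (z + c) + 2 * (({i | c i ≠ 0} : Finset (Fin t)).filter fun i => z i ≠ 0).card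
      = hammingNorm z + hammingNorm c := by
  classical
  set S : Finset (Fin t) := {i | c i ≠ 0} with hS
  have hsplit : ∀ p : Fin t → Prop, ∀ _ : DecidablePred p,
      ({i | p i} : Finset (Fin t)).card = (S.filter p).card + (Sᶜ.filter p).card := by
    intro p _
    rw [← card_union_of_disjoint (disjoint_filter_filter disjoint_compl_right),
      ← filter_union, union_compl]
  unfold hammingNorm
  rw [hsplit _ _, hsplit _ _]
  have h1 : Sᶜ.filter (fun i => (z + c) i ≠ 0) = Sᶜ.filter (fun i => z i ≠ 0) := by
    apply filter_congr
    intro i hi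
    have : c i = 0 := by
      by_contra h
      exact (mem_compl.mp hi) (by simp [hS, h])
    simp [this]
  have h2 : S.filter (fun i => (z + c) i ≠ 0) = S.filter (fun i => z i = 0) := by
    apply filter_congr
    intro i hi
    have hne : c i ≠ 0 := by
      rw [hS] at hi
      simpa using (mem_filter.mp hi).2
    have hc : c i = 1 := (zmod2_cases (c i)).resolve_left hne
    rcases zmod2_cases (z i) with h | h <;> simp [h, hc] <;> decide
  have h3 : (S.filter fun i => z i = 0).card + (S.filter fun i => z i ≠ 0).card = S.card := by
    have := card_filter_add_card_filter_not (s := S) (p := fun i => z i = 0)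
    simpa using this
  rw [h1, h2, ← hS]
  omega

lemma count_level {t : ℕ} (S : Finset (Fin t)) (m : ℕ) :
    (univ.filter fun z : Fin t → ZMod 2 => (S.filter fun i => z i ≠ 0).card = m).card
      = S.card.choose m * 2 ^ (t - S.card) := by
  classical
  have key : (univ.filter fun z : Fin t → ZMod 2 => (S.filter fun i => z i ≠ 0).card = m).card
      = (S.powersetCard m ×ˢ Sᶜ.powerset).card := by
    apply card_nbij' (i := fun z => (S.filter fun i => z i ≠ 0, Sᶜ.filter fun i => z i ≠ 0))
      (j := fun p i => if i ∈ p.1 ∪ p.2 then 1 else 0)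
    · intro z hz
      simp only [mem_coe, mem_filter, mem_univ, true_and] at hz
      simp only [mem_coe, mem_product, mem_powersetCard, mem_powerset]
      exact ⟨⟨filter_subset _ _, hz⟩, filter_subset _ _⟩
    · rintro ⟨T, U⟩ hp
      simp only [mem_coe, mem_product, mem_powersetCard, mem_powerset] at hp
      obtain ⟨⟨hTS, hTm⟩, hU⟩ := hp
      simp only [mem_coe, mem_filter, mem_univ, true_and]
      have heq : (S.filter fun i => (if i ∈ T ∪ U then (1 : ZMod 2) else 0) ≠ 0) = T := by
        ext i
        simp only [mem_filter, mem_union]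
        constructor
        · rintro ⟨hiS, hne⟩
          by_cases hiT : i ∈ T
          · exact hiT
          · exfalso; apply hne
            have hiU : i ∉ U := fun hiU => (mem_compl.mp (hU hiU)) hiS
            simp [hiT, hiU]
        · intro hiT
          refine ⟨hTS hiT, ?_⟩
          simp [hiT]
      rw [heq]
      exact hTm
    · intro z hz
      funext i
      by_cases h : i ∈ S
      · rcases zmod2_cases (z i) with h0 | h0 <;>
          simp [h0, mem_union, mem_filter, h]
      · have h' : i ∈ Sᶜ := mem_compl.mpr h
        rcases zmod2_cases (z i) with h0 | h0 <;>
          simp [h0, mem_union, mem_filter, h, h']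
    · rintro ⟨T, U⟩ hp
      simp only [mem_coe, mem_product, mem_powersetCard, mem_powerset] at hp
      obtain ⟨⟨hTS, hTm⟩, hU⟩ := hp
      have hd : ∀ i, ¬(i ∈ T ∧ i ∈ U) := by
        intro i ⟨hiT, hiU⟩
        exact (mem_compl.mp (hU hiU)) (hTS hiT)
      ext i <;> simp only [mem_filter, mem_union]
      · constructor
        · rintro ⟨hiS, hne⟩
          by_cases hiT : i ∈ T
          · exact hiT
          · exfalso; apply hne
            by_cases hiU : i ∈ U
            · exact absurd hiS (mem_compl.mp (hU hiU))
            · simp [hiT, hiU]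
        · intro hiT
          refine ⟨hTS hiT, ?_⟩
          simp [hiT]
      · constructor
        · rintro ⟨hiS, hne⟩
          by_cases hiU : i ∈ U
          · exact hiU
          · exfalso; apply hne
            by_cases hiT : i ∈ T
            · exact absurd (hTS hiT) (mem_compl.mp hiS)
            · simp [hiT, hiU]
        · intro hiU
          refine ⟨hU hiU, ?_⟩
          simp [hiU]
  rw [key, card_product, card_powersetCard, card_powerset, card_compl]
  simp

/-- If an invertible matrix `O` over `F₂` has a column of odd Hamming weight `r`,
then the probability (over uniform `y ∈ F₂^t`) that `h(Oy) = h(y)` is at most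
`1/2 + 2^{-(r+1)} * binom(r+1, (r+1)/2)`. -/
theorem stmt_1 (t r : ℕ) (O : Matrix (Fin t) (Fin t) (ZMod 2))
    (hO : IsUnit O) (j : Fin t)
    (hcol : hammingNorm (fun i => O i j) = r) (hr : Odd r) :
    ((univ.filter (fun y : Fin t → ZMod 2 =>
        hammingNorm (O.mulVec y) = hammingNorm y)).card : ℚ) / 2 ^ t
      ≤ 1 / 2 + ((r + 1).choose ((r + 1) / 2) : ℚ) / 2 ^ (r + 1) := by
  classical
  obtain ⟨s, hs⟩ := hr
  set c : Fin t → ZMod 2 := fun i => O i j with hc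
  set e : Fin t → ZMod 2 := Pi.single j 1 with he
  set A : Finset (Fin t → ZMod 2) :=
    univ.filter (fun y => hammingNorm (O.mulVec y) = hammingNorm y) with hA
  set S : Finset (Fin t) := {i | c i ≠ 0} with hS
  have hScard : S.card = r := hcol
  have htr : r ≤ t := by
    rw [← hScard]
    calc S.card ≤ (univ : Finset (Fin t)).card := card_le_univ S
    _ = t := by simp
  -- basic facts about e
  have hmule : O.mulVec e = c := by
    rw [he]
    simp [hc, Matrix.mulVec_single]
    rfl
  have hnorme : hammingNorm e = 1 := by
    have : ({i | e i ≠ 0} : Finset (Fin t)) = {j} := by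
      ext i
      rcases eq_or_ne i j with h | h <;> simp [he, h, Pi.single_apply]
    show ({i | e i ≠ 0} : Finset (Fin t)).card = 1
    rw [this, card_singleton]
  -- sigma involution
  have hsig : ∀ y : Fin t → ZMod 2, y + e + e = y := by
    intro y
    have : e + e = 0 := by
      funext i
      rcases zmod2_cases (e i) with h | h <;> simp [h]; decide
    rw [add_assoc, this, add_zero]
  have hinj : Function.Injective (fun y : Fin t → ZMod 2 => y + e) :=
    fun a b hab => by simpa using congrArg (· + e) hab
  -- pairing bound
  have hpair : 2 * A.card ≤ 2 ^ t + (A.filter fun y => y + e ∈ A).card := by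
    have himg : (A.image (· + e)).card = A.card := card_image_of_injective _ hinj
    have hint : A ∩ A.image (· + e) = A.filter fun y => y + e ∈ A := by
      ext y
      simp only [mem_inter, mem_image, mem_filter]
      constructor
      · rintro ⟨hy, x, hx, hxy⟩
        refine ⟨hy, ?_⟩
        have : x = y + e := by rw [← hxy, hsig]
        rwa [← this]
      · rintro ⟨hy, hy'⟩
        exact ⟨hy, y + e, hy', hsig y⟩
    have huniv : (A ∪ A.image (· + e)).card ≤ 2 ^ t := by
      calc (A ∪ A.image (· + e)).card ≤ (univ : Finset (Fin t → ZMod 2)).card := card_le_univ _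
      _ = 2 ^ t := by simp [card_univ]
    have hcui := card_union_add_card_inter A (A.image (· + e))
    rw [hint] at hcui
    omega
  -- both-set is contained in two level sets
  have hsub : (A.filter fun y => y + e ∈ A) ⊆
      (univ.filter fun y : Fin t → ZMod 2 =>
        (S.filter fun i => (O.mulVec y) i ≠ 0).card = s)
      ∪ (univ.filter fun y : Fin t → ZMod 2 =>
        (S.filter fun i => (O.mulVec y) i ≠ 0).card = s + 1) := by
    intro y hy
    simp only [hA, mem_filter, mem_univ, true_and] at hy
    obtain ⟨h1, h2⟩ := hy
    have w1 := weight_add (O.mulVec y) c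
    have w2 := weight_add y e
    rw [Matrix.mulVec_add, hmule] at h2
    have hle : (({i | e i ≠ 0} : Finset (Fin t)).filter fun i => y i ≠ 0).card ≤ 1 := by
      calc _ ≤ ({i | e i ≠ 0} : Finset (Fin t)).card := card_filter_le _ _
      _ = 1 := hnorme
    rw [hnorme] at w2
    rw [hcol] at w1
    rw [← hS] at w1
    simp only [mem_union, mem_filter, mem_univ, true_and, ← hS]
    omega
  -- count the level sets
  have hcount : ∀ m : ℕ, (univ.filter fun y : Fin t → ZMod 2 =>
      (S.filter fun i => (O.mulVec y) i ≠ 0).card = m).card = r.choose m * 2 ^ (t - r) := by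
    intro m
    have hdet : IsUnit O.det := (Matrix.isUnit_iff_isUnit_det O).mp hO
    rw [← hScard, ← count_level S m]
    apply card_nbij' (i := fun y => O.mulVec y) (j := fun z => O⁻¹.mulVec z)
    · intro y hy
      simpa using (mem_filter.mp hy).2
    · intro z hz
      simp only [mem_coe, mem_filter, mem_univ, true_and] at hz ⊢
      rwa [Matrix.mulVec_mulVec, Matrix.mul_nonsing_inv O hdet, Matrix.one_mulVec]
    · intro y _
      dsimp only
      rw [Matrix.mulVec_mulVec, Matrix.nonsing_inv_mul O hdet, Matrix.one_mulVec]
    · intro z _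
      dsimp only
      rw [Matrix.mulVec_mulVec, Matrix.mul_nonsing_inv O hdet, Matrix.one_mulVec]
  -- combine to nat inequality
  have hboth : (A.filter fun y => y + e ∈ A).card ≤ (r + 1).choose (s + 1) * 2 ^ (t - r) := by
    calc (A.filter fun y => y + e ∈ A).card
        ≤ _ := card_le_card hsub
      _ ≤ _ := card_union_le _ _
      _ = r.choose s * 2 ^ (t - r) + r.choose (s + 1) * 2 ^ (t - r) := by
          rw [hcount s, hcount (s + 1)]
      _ = (r + 1).choose (s + 1) * 2 ^ (t - r) := by
          rw [← add_mul, ← Nat.choose_succ_succ']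
  have hkey : 2 * A.card * 2 ^ r ≤ 2 ^ (t + r) + (r + 1).choose (s + 1) * 2 ^ t := by
    calc 2 * A.card * 2 ^ r ≤ (2 ^ t + (r + 1).choose (s + 1) * 2 ^ (t - r)) * 2 ^ r :=
          Nat.mul_le_mul_right _ (le_trans hpair (by omega))
      _ = 2 ^ (t + r) + (r + 1).choose (s + 1) * 2 ^ t := by
          rw [add_mul, ← pow_add, mul_assoc, ← pow_add, Nat.sub_add_cancel htr]
  -- final arithmetic over ℚ
  have hhalf : (r + 1) / 2 = s + 1 := by omega
  rw [hhalf]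
  have h2t : (0:ℚ) < 2 ^ t := by positivity
  have h2r : (0:ℚ) < 2 ^ (r + 1) := by positivity
  have hq : (2 * A.card * 2 ^ r : ℚ) ≤ 2 ^ (t + r) + (r + 1).choose (s + 1) * 2 ^ t := by
    exact_mod_cast hkey
  have e1 : (2:ℚ) ^ (t + r) = 2 ^ t * 2 ^ r := pow_add 2 t r
  have e2 : (2:ℚ) ^ (r + 1) = 2 ^ r * 2 := pow_succ 2 r
  rw [e1] at hq
  rw [div_add_div _ _ (two_ne_zero) (ne_of_gt h2r), div_le_div_iff₀ h2t (by positivity)]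
  rw [e2]
  nlinarith [hq]
end

section
/- Let y be uniformly random in F_2^t and let v ∈ F_2^t be a fixed vector of odd Hamming weight r. Then the probability that |h(y+v) - h(y)| = 1 equals 2^{-r} * binomial(r+1, (r+1)/2). -/
open Finset

private lemma aux_filter {t : ℕ} (S p1 p2 : Finset (Fin t)) (hB : p1 ⊆ S)
    (hC : p2 ⊆ univ \ S) :
    S.filter (fun i => (if i ∈ p1 ∪ p2 then (1 : ZMod 2) else 0) ≠ 0) = p1 ∧
    (univ \ S).filter (fun i => (if i ∈ p1 ∪ p2 then (1 : ZMod 2) else 0) ≠ 0) = p2 := by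
  have hone : (1 : ZMod 2) ≠ 0 := by decide
  constructor
  · ext i
    simp only [mem_filter, ne_eq, ite_eq_right_iff, not_forall, mem_union]
    constructor
    · rintro ⟨hiS, hmem, -⟩
      rcases hmem with h | h
      · exact h
      · exact absurd hiS (by simpa using (mem_sdiff.mp (hC h)).2)
    · intro h
      exact ⟨hB h, Or.inl h, hone⟩
  · ext i
    simp only [mem_filter, ne_eq, ite_eq_right_iff, not_forall, mem_sdiff, mem_univ,
      true_and, mem_union]
    constructor
    · rintro ⟨hiS, hmem, -⟩
      rcases hmem with h | h
      · exact absurd (hB h) hiS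
      · exact h
    · intro h
      exact ⟨(mem_sdiff.mp (hC h)).2, Or.inr h, hone⟩

lemma count_support_card (t : ℕ) (S : Finset (Fin t)) (a : ℕ) :
    ((univ.filter (fun y : Fin t → ZMod 2 =>
        (S.filter (fun i => y i ≠ 0)).card = a)).card : ℕ)
      = S.card.choose a * 2 ^ (t - S.card) := by
  have key :
      (univ.filter (fun y : Fin t → ZMod 2 =>
        (S.filter (fun i => y i ≠ 0)).card = a)).card
      = ((S.powersetCard a) ×ˢ ((univ \ S).powerset)).card := by
    refine Finset.card_bij'
      (fun y _ => (S.filter (fun i => y i ≠ 0), (univ \ S).filter (fun i => y i ≠ 0)))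
      (fun p _ => fun i => if i ∈ p.1 ∪ p.2 then 1 else 0) ?hi ?hj ?left ?right
    case hi =>
      intro y hy
      simp only [mem_filter, mem_univ, true_and] at hy
      rw [mem_product]
      exact ⟨mem_powersetCard.mpr ⟨filter_subset _ _, hy⟩,
        mem_powerset.mpr (filter_subset _ _)⟩
    case hj =>
      intro p hp
      rw [mem_product] at hp
      obtain ⟨hB', hC'⟩ := hp
      obtain ⟨hB, hBa⟩ := mem_powersetCard.mp hB'
      refine mem_filter.mpr ⟨mem_univ _, ?_⟩
      rw [(aux_filter S p.1 p.2 hB (mem_powerset.mp hC')).1]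
      exact hBa
    case left =>
      intro y hy
      funext i
      have h1 : ∀ x : ZMod 2, x ≠ 0 → x = 1 := by decide
      by_cases h : y i = 0
      · simp [h, mem_filter]
      · simp [mem_filter, h, (h1 _ h).symm]
    case right =>
      intro p hp
      rw [mem_product] at hp
      obtain ⟨hB', hC'⟩ := hp
      obtain ⟨hB, hBa⟩ := mem_powersetCard.mp hB'
      obtain ⟨e1, e2⟩ := aux_filter S p.1 p.2 hB (mem_powerset.mp hC')
      exact Prod.ext e1 e2
  rw [key, card_product, card_powersetCard, card_powerset, card_sdiff_of_subset (subset_univ S),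
    card_univ, Fintype.card_fin]

/-- For a fixed vector `v ∈ F₂^t` of odd Hamming weight `r`, the probability
over uniform `y ∈ F₂^t` that `|h(y+v) - h(y)| = 1` equals
`2^{-r} * binom(r+1, (r+1)/2)`. -/
theorem stmt_2 (t r : ℕ) (v : Fin t → ZMod 2) (hv : hammingNorm v = r)
    (hr : Odd r) :
    ((univ.filter (fun y : Fin t → ZMod 2 =>
        |(hammingNorm (y + v) : ℤ) - (hammingNorm y : ℤ)| = 1)).card : ℚ) / 2 ^ t
      = ((r + 1).choose ((r + 1) / 2) : ℚ) / 2 ^ r := by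
  obtain ⟨s, rfl⟩ := hr
  set S : Finset (Fin t) := univ.filter (fun i => v i ≠ 0) with hS
  have hScard : S.card = 2 * s + 1 := hv
  have hrt : 2 * s + 1 ≤ t := by
    calc 2 * s + 1 = S.card := hScard.symm
    _ ≤ (univ : Finset (Fin t)).card := card_le_card (subset_univ S)
    _ = t := by simp
  have hcond : ∀ y : Fin t → ZMod 2,
      (|(hammingNorm (y + v) : ℤ) - (hammingNorm y : ℤ)| = 1) ↔
      ((S.filter (fun i => y i ≠ 0)).card = s ∨ (S.filter (fun i => y i ≠ 0)).card = s + 1) := by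
    intro y
    set k := (S.filter (fun i => y i ≠ 0)).card with hk
    set m := ((univ \ S).filter (fun i => y i ≠ 0)).card with hm
    have hksr : k ≤ S.card := card_le_card (filter_subset _ _)
    have huniv : (univ : Finset (Fin t)) = S ∪ (univ \ S) := by
      rw [union_sdiff_of_subset (subset_univ S)]
    have hny : hammingNorm y = k + m := by
      show (univ.filter (fun i => y i ≠ 0)).card = k + m
      rw [huniv, filter_union, card_union_of_disjoint
        (disjoint_filter_filter disjoint_sdiff)]
    have hnyv : hammingNorm (y + v) = (S.card - k) + m := by
      show (univ.filter (fun i => (y + v) i ≠ 0)).card = (S.card - k) + m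
      rw [huniv, filter_union, card_union_of_disjoint
        (disjoint_filter_filter disjoint_sdiff)]
      have e1 : S.filter (fun i => (y + v) i ≠ 0) = S.filter (fun i => ¬ y i ≠ 0) := by
        apply filter_congr
        intro i hi
        have hvi : v i ≠ 0 := (mem_filter.mp hi).2
        have h2 : ∀ x w : ZMod 2, w ≠ 0 → ((x + w ≠ 0) ↔ ¬ x ≠ 0) := by decide
        simpa using h2 (y i) (v i) hvi
      have e2 : (univ \ S).filter (fun i => (y + v) i ≠ 0)
          = (univ \ S).filter (fun i => y i ≠ 0) := by
        apply filter_congr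
        intro i hi
        have hvi : v i = 0 := by
          have := (mem_sdiff.mp hi).2
          simp only [hS, mem_filter, mem_univ, true_and, not_not] at this
          exact this
        simp [hvi]
      rw [e1, e2]
      congr 1
      have := Finset.card_filter_add_card_filter_not
        (s := S) (p := fun i => y i ≠ 0)
      omega
    rw [hny, hnyv]
    have h3 : ((S.card - k : ℕ) : ℤ) = (S.card : ℤ) - (k : ℤ) := Nat.cast_sub hksr
    push_cast [h3]
    rw [hScard]
    constructor
    · intro h
      rcases (abs_eq (by norm_num : (0:ℤ) ≤ 1)).mp h with h | h <;> omega
    · intro h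
      rw [abs_eq (by norm_num : (0:ℤ) ≤ 1)]
      omega
  have hsplit : (univ.filter (fun y : Fin t → ZMod 2 =>
        |(hammingNorm (y + v) : ℤ) - (hammingNorm y : ℤ)| = 1))
      = (univ.filter (fun y : Fin t → ZMod 2 => (S.filter (fun i => y i ≠ 0)).card = s))
        ∪ (univ.filter (fun y : Fin t → ZMod 2 =>
            (S.filter (fun i => y i ≠ 0)).card = s + 1)) := by
    ext y
    simp only [mem_filter, mem_univ, true_and, mem_union, hcond y]
  have hdisj : Disjoint
      (univ.filter (fun y : Fin t → ZMod 2 => (S.filter (fun i => y i ≠ 0)).card = s))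
      (univ.filter (fun y : Fin t → ZMod 2 => (S.filter (fun i => y i ≠ 0)).card = s + 1)) := by
    rw [Finset.disjoint_filter]
    intro y _ h1 h2
    omega
  have hcard : (univ.filter (fun y : Fin t → ZMod 2 =>
        |(hammingNorm (y + v) : ℤ) - (hammingNorm y : ℤ)| = 1)).card
      = (2 * s + 2).choose (s + 1) * 2 ^ (t - (2 * s + 1)) := by
    rw [hsplit, card_union_of_disjoint hdisj, count_support_card, count_support_card, hScard]
    have : (2 * s + 2).choose (s + 1) = (2 * s + 1).choose s + (2 * s + 1).choose (s + 1) :=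
      Nat.choose_succ_succ (2 * s + 1) s
    rw [this, add_mul]
  rw [hcard]
  have hdiv : (2 * s + 1 + 1) / 2 = s + 1 := by omega
  rw [hdiv]
  have h2t : (2 : ℚ) ^ t = 2 ^ (t - (2 * s + 1)) * 2 ^ (2 * s + 1) := by
    rw [← pow_add, Nat.sub_add_cancel hrt]
  push_cast
  rw [h2t]
  have h1 : (2 : ℚ) ^ (t - (2 * s + 1)) ≠ 0 := by positivity
  have h2 : (2 : ℚ) ^ (2 * s + 1) ≠ 0 := by positivity
  field_simp
end

section
/- Let M, L be positive integers with M ≥ L ≥ 1 and let m be a real number with 2^m > M − L. Then Σ_{k=0}^{M−L} p(M,k) · 2^{−m(M−k)} ≤ M^{L+1} · 2^{−mL}, where p(M,k) is the number of permutations of M elements with exactly k fixed points. -/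
open Finset

lemma numDerangements_le_factorial (n : ℕ) : numDerangements n ≤ n.factorial := by
  have h := card_derangements_eq_numDerangements (Fin n)
  simp only [Fintype.card_fin] at h
  rw [← h]
  calc Fintype.card (derangements (Fin n))
      ≤ Fintype.card (Equiv.Perm (Fin n)) :=
        Fintype.card_le_of_injective _ Subtype.val_injective
    _ = n.factorial := by simp [Fintype.card_perm]

/-- For `M ≥ L ≥ 1` and real `m` with `2^m > M − L`,
`Σ_{k=0}^{M−L} p(M,k)·2^{−m(M−k)} ≤ M^{L+1}·2^{−mL}`, where
`p(M,k) = C(M,k)·D(M−k)` counts permutations of `M` elements with `k` fixed points. -/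
theorem stmt_7 (M L : ℕ) (m : ℝ) (hL : 1 ≤ L) (hLM : L ≤ M)
    (hm : ((M : ℝ) - L) < 2 ^ m) :
    ∑ k ∈ range (M - L + 1),
        ((M.choose k * numDerangements (M - k) : ℕ) : ℝ) *
          2 ^ (-(m * ((M : ℝ) - (k : ℝ))))
      ≤ (M : ℝ) ^ (L + 1) * 2 ^ (-(m * (L : ℝ))) := by
  have h2m : (0:ℝ) < 2 ^ m := Real.rpow_pos_of_pos (by norm_num) m
  have hML : ((M - L : ℕ) : ℝ) ≤ (2:ℝ) ^ m := by
    calc ((M - L : ℕ) : ℝ) = (M:ℝ) - L := by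
          rw [Nat.cast_sub hLM]
      _ ≤ 2 ^ m := le_of_lt hm
  have key : ∀ k ∈ range (M - L + 1),
      ((M.choose k * numDerangements (M - k) : ℕ) : ℝ) *
          2 ^ (-(m * ((M : ℝ) - (k : ℝ))))
        ≤ (M:ℝ) ^ L * 2 ^ (-(m * (L : ℝ))) := by
    intro k hk
    rw [mem_range, Nat.lt_succ_iff] at hk
    have hkM : k ≤ M := le_trans hk (Nat.sub_le _ _)
    set j : ℕ := M - k - L with hj
    have hMk : M - k = L + j := by omega
    have hnat : M.choose k * numDerangements (M - k)
        ≤ M.descFactorial L * (M - L).descFactorial j := by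
      calc M.choose k * numDerangements (M - k)
          ≤ M.choose k * (M - k).factorial :=
            Nat.mul_le_mul_left _ (numDerangements_le_factorial _)
        _ = M.descFactorial (M - k) := by
            rw [Nat.descFactorial_eq_factorial_mul_choose, ← Nat.choose_symm hkM]
            ring
        _ = (M - L).descFactorial ((M - k) - L) * M.descFactorial L :=
            (Nat.descFactorial_mul_descFactorial (by omega)).symm
        _ = M.descFactorial L * (M - L).descFactorial j := by
            rw [mul_comm]
    have hcast : ((M : ℝ) - (k : ℝ)) = (L : ℝ) + (j : ℝ) := by
      have h1 : ((M - k : ℕ) : ℝ) = (M:ℝ) - k := by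
        rw [Nat.cast_sub hkM]
      rw [← h1, hMk]; push_cast; ring
    have hsplit : (2:ℝ) ^ (-(m * ((M : ℝ) - (k : ℝ))))
        = 2 ^ (-(m * (L:ℝ))) * 2 ^ (-(m * (j:ℝ))) := by
      rw [← Real.rpow_add (by norm_num : (0:ℝ) < 2)]
      congr 1
      rw [hcast]; ring
    have hdescj : (((M - L).descFactorial j : ℕ) : ℝ) ≤ ((2:ℝ) ^ m) ^ j := by
      calc (((M - L).descFactorial j : ℕ) : ℝ) ≤ (((M - L : ℕ) : ℝ)) ^ j := by
            exact_mod_cast Nat.descFactorial_le_pow _ _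
        _ ≤ ((2:ℝ) ^ m) ^ j := pow_le_pow_left₀ (Nat.cast_nonneg _) hML j
    have hpow : ((2:ℝ) ^ m) ^ j * 2 ^ (-(m * (j:ℝ))) = 1 := by
      rw [← Real.rpow_natCast ((2:ℝ)^m) j, ← Real.rpow_mul (by norm_num : (0:ℝ) ≤ 2),
        ← Real.rpow_add (by norm_num : (0:ℝ) < 2)]
      rw [show m * (j:ℝ) + -(m * (j:ℝ)) = 0 by ring, Real.rpow_zero]
    have hrpos : (0:ℝ) ≤ 2 ^ (-(m * ((M : ℝ) - (k : ℝ)))) :=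
      (Real.rpow_pos_of_pos (by norm_num) _).le
    calc ((M.choose k * numDerangements (M - k) : ℕ) : ℝ) *
            2 ^ (-(m * ((M : ℝ) - (k : ℝ))))
        ≤ ((M.descFactorial L * (M - L).descFactorial j : ℕ) : ℝ) *
            2 ^ (-(m * ((M : ℝ) - (k : ℝ)))) :=
          mul_le_mul_of_nonneg_right (Nat.cast_le.2 hnat) hrpos
      _ = (M.descFactorial L : ℝ) *
            (((M - L).descFactorial j : ℝ) * 2 ^ (-(m * (j:ℝ)))) *
            2 ^ (-(m * (L:ℝ))) := by
          rw [hsplit]; push_cast; ring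
      _ ≤ (M.descFactorial L : ℝ) *
            (((2:ℝ) ^ m) ^ j * 2 ^ (-(m * (j:ℝ)))) *
            2 ^ (-(m * (L:ℝ))) := by
          gcongr
      _ = (M.descFactorial L : ℝ) * 2 ^ (-(m * (L:ℝ))) := by rw [hpow]; ring
      _ ≤ (M:ℝ) ^ L * 2 ^ (-(m * (L:ℝ))) := by
          apply mul_le_mul_of_nonneg_right _ (Real.rpow_pos_of_pos (by norm_num) _).le
          exact_mod_cast Nat.descFactorial_le_pow M L
  calc ∑ k ∈ range (M - L + 1),
        ((M.choose k * numDerangements (M - k) : ℕ) : ℝ) *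
          2 ^ (-(m * ((M : ℝ) - (k : ℝ))))
      ≤ ∑ _k ∈ range (M - L + 1), (M:ℝ) ^ L * 2 ^ (-(m * (L : ℝ))) :=
        sum_le_sum key
    _ = ((M - L + 1 : ℕ) : ℝ) * ((M:ℝ) ^ L * 2 ^ (-(m * (L : ℝ)))) := by
        rw [sum_const, card_range, nsmul_eq_mul]
    _ ≤ (M : ℝ) * ((M:ℝ) ^ L * 2 ^ (-(m * (L : ℝ)))) := by
        apply mul_le_mul_of_nonneg_right _ (by positivity)
        exact_mod_cast (by omega : M - L + 1 ≤ M)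
    _ = (M : ℝ) ^ (L + 1) * 2 ^ (-(m * (L : ℝ))) := by
        rw [pow_succ]; ring
end

section
/- Let A, B be linear operators on a finite-dimensional Hilbert space H, and consider the rank-one superoperator Φ(X) = A · tr(B†X). Then the diamond norm of Φ satisfies ‖Φ‖_◇ ≤ ‖A‖_1 · ‖B‖_∞, where ‖·‖_1 is the trace norm and ‖·‖_∞ the spectral norm. -/
open scoped ComplexOrder

/-- The trace norm (Schatten 1-norm) of a complex matrix: the trace of `√(AᴴA)`. -/
noncomputable def traceNorm {n : Type*} [Fintype n] [DecidableEq n]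
    (A : Matrix n n ℂ) : ℝ :=
  (((Matrix.posSemidef_conjTranspose_mul_self A).1.eigenvectorUnitary : Matrix n n ℂ) *
      Matrix.diagonal (((↑) : ℝ → ℂ) ∘ (Real.sqrt ·) ∘
        (Matrix.posSemidef_conjTranspose_mul_self A).1.eigenvalues) *
      (star (Matrix.posSemidef_conjTranspose_mul_self A).1.eigenvectorUnitary :
        Matrix n n ℂ)).trace.re

/-- The spectral norm (operator norm on ℓ²) of a complex matrix. -/
noncomputable def specNorm {n : Type*} [Fintype n] [DecidableEq n]
    (A : Matrix n n ℂ) : ℝ :=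
  ‖LinearMap.toContinuousLinearMap (Matrix.toEuclideanLin A)‖

/-- The extension `Φ ⊗ id` of a superoperator `Φ` on `L(ℂ^n)` to `L(ℂ^n ⊗ ℂ^m)`. -/
noncomputable def extTensor {n m : Type*} [Fintype n] [Fintype m]
    (Φ : Matrix n n ℂ →ₗ[ℂ] Matrix n n ℂ) (X : Matrix (n × m) (n × m) ℂ) :
    Matrix (n × m) (n × m) ℂ :=
  Matrix.of fun p q => Φ (Matrix.of fun i j => X (i, p.2) (j, q.2)) p.1 q.1

/-- The diamond norm `‖Φ‖_◇ = ‖Φ ⊗ id‖_{1→1}` of a superoperator on `L(ℂ^n)`. -/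
noncomputable def diamondNorm {n : Type*} [Fintype n] [DecidableEq n]
    (Φ : Matrix n n ℂ →ₗ[ℂ] Matrix n n ℂ) : ℝ :=
  ⨆ X : {X : Matrix (n × n) (n × n) ℂ // traceNorm X ≤ 1},
    traceNorm (extTensor Φ X.1)

namespace Matrix.PosSemidef
open scoped MatrixOrder

/-- the eigen-decomposition square root of a positive semidefinite matrix -/
noncomputable def sqrt {n : Type*} [Fintype n] [DecidableEq n] {A : Matrix n n ℂ}
    (hA : A.PosSemidef) : Matrix n n ℂ :=
  (hA.1.eigenvectorUnitary : Matrix n n ℂ) *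
      Matrix.diagonal (((↑) : ℝ → ℂ) ∘ (Real.sqrt ·) ∘ hA.1.eigenvalues) *
      (star hA.1.eigenvectorUnitary : Matrix n n ℂ)

lemma sqrt_eq_cfc {n : Type*} [Fintype n] [DecidableEq n] {A : Matrix n n ℂ}
    (hA : A.PosSemidef) : hA.sqrt = CFC.sqrt A := by
  rw [CFC.sqrt_eq_real_sqrt A hA.nonneg, cfcₙ_eq_cfc, hA.1.cfc_eq, IsHermitian.cfc,
    Unitary.conjStarAlgAut_apply]
  rfl

lemma posSemidef_sqrt {n : Type*} [Fintype n] [DecidableEq n] {A : Matrix n n ℂ}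
    (hA : A.PosSemidef) : hA.sqrt.PosSemidef := by
  rw [sqrt_eq_cfc]
  exact Matrix.nonneg_iff_posSemidef.mp (CFC.sqrt_nonneg A)

lemma sqrt_mul_self {n : Type*} [Fintype n] [DecidableEq n] {A : Matrix n n ℂ}
    (hA : A.PosSemidef) : hA.sqrt * hA.sqrt = A := by
  rw [sqrt_eq_cfc]
  exact CFC.sqrt_mul_sqrt_self A hA.nonneg

lemma eq_sqrt_of_sq_eq {n : Type*} [Fintype n] [DecidableEq n] {A B : Matrix n n ℂ}
    (hB : B.PosSemidef) (hA : A.PosSemidef) (h : B ^ 2 = A) : B = hA.sqrt := by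
  rw [sqrt_eq_cfc, eq_comm, CFC.sqrt_eq_iff A B hA.nonneg hB.nonneg, ← h, sq]

end Matrix.PosSemidef

namespace DiamondAux
open Matrix
open scoped Kronecker Matrix.Norms.L2Operator
set_option linter.unusedSectionVars false

variable {n m : Type*} [Fintype n] [DecidableEq n] [Fintype m] [DecidableEq m]

lemma specNorm_eq_norm (A : Matrix n n ℂ) : specNorm A = ‖A‖ := rfl

lemma norm_one_le : ‖(1 : Matrix n n ℂ)‖ ≤ 1 := by
  rw [Matrix.cstar_norm_def, _root_.map_one]
  exact ContinuousLinearMap.norm_id_le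

lemma norm_le_one_of_unitary {V : Matrix n n ℂ} (h : Vᴴ * V = 1) : ‖V‖ ≤ 1 := by
  have h2 : ‖V‖ * ‖V‖ = ‖Vᴴ * V‖ := (Matrix.l2_opNorm_conjTranspose_mul_self V).symm
  rw [h] at h2
  nlinarith [norm_nonneg V, norm_one_le (n := n)]

lemma coord_norm_le {k : Type*} [Fintype k] (y : EuclideanSpace ℂ k) (i : k) : ‖y i‖ ≤ ‖y‖ := by
  rw [EuclideanSpace.norm_eq]
  calc ‖y i‖ = Real.sqrt (‖y i‖ ^ 2) := (Real.sqrt_sq (norm_nonneg _)).symm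
    _ ≤ _ := Real.sqrt_le_sqrt <| Finset.single_le_sum
        (f := fun j => ‖y j‖ ^ 2) (fun j _ => sq_nonneg _) (Finset.mem_univ i)

lemma norm_entry_le (A : Matrix n m ℂ) (i : n) (j : m) : ‖A i j‖ ≤ ‖A‖ := by
  have h := Matrix.l2_opNorm_mulVec A (EuclideanSpace.single j (1 : ℂ))
  rw [EuclideanSpace.norm_single, norm_one, mul_one] at h
  refine le_trans ?_ h
  have h2 : ((EuclideanSpace.equiv n ℂ).symm <| A *ᵥ (EuclideanSpace.single j (1:ℂ))) i = A i j := by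
    show (A *ᵥ (WithLp.equiv 2 (m → ℂ)) (EuclideanSpace.single j (1:ℂ))) i = A i j
    rw [show (WithLp.equiv 2 (m → ℂ)) (EuclideanSpace.single j (1:ℂ)) = Pi.single j 1 from rfl,
      mulVec_single]
    simp
  rw [← h2]
  exact coord_norm_le _ i


lemma l2_opNorm_le_bound (A : Matrix m n ℂ) {c : ℝ} (hc : 0 ≤ c)
    (h : ∀ x : EuclideanSpace ℂ n, ‖(EuclideanSpace.equiv m ℂ).symm (A *ᵥ ⇑x)‖ ≤ c * ‖x‖) :
    ‖A‖ ≤ c := by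
  rw [Matrix.l2_opNorm_def]
  refine ContinuousLinearMap.opNorm_le_bound _ hc fun x => ?_
  exact h x

lemma euclid_norm_sq {k : Type*} [Fintype k] (v : k → ℂ) :
    ‖(EuclideanSpace.equiv k ℂ).symm v‖ ^ 2 = ∑ i, ‖v i‖ ^ 2 := by
  rw [EuclideanSpace.norm_eq, Real.sq_sqrt (Finset.sum_nonneg fun i _ => sq_nonneg _)]
  rfl

lemma norm_diagonal_le (d : n → ℂ) {c : ℝ} (hc : 0 ≤ c) (h : ∀ i, ‖d i‖ ≤ c) :
    ‖diagonal d‖ ≤ c := by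
  refine l2_opNorm_le_bound _ hc fun x => ?_
  have h1 : ∀ i, ‖(diagonal d *ᵥ ⇑x) i‖ ^ 2 ≤ c ^ 2 * ‖x i‖ ^ 2 := by
    intro i
    rw [mulVec_diagonal, norm_mul, mul_pow]
    exact mul_le_mul_of_nonneg_right (pow_le_pow_left₀ (norm_nonneg _) (h i) 2) (sq_nonneg _)
  have h2 : ‖(EuclideanSpace.equiv n ℂ).symm (diagonal d *ᵥ ⇑x)‖ ^ 2 ≤ (c * ‖x‖) ^ 2 := by
    rw [euclid_norm_sq, mul_pow]
    calc ∑ i, ‖(diagonal d *ᵥ ⇑x) i‖ ^ 2 ≤ ∑ i, c ^ 2 * ‖x i‖ ^ 2 :=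
          Finset.sum_le_sum fun i _ => h1 i
      _ = c ^ 2 * ∑ i, ‖x i‖ ^ 2 := by rw [Finset.mul_sum]
      _ = c ^ 2 * ‖x‖ ^ 2 := by rw [EuclideanSpace.norm_eq,
            Real.sq_sqrt (Finset.sum_nonneg fun i _ => sq_nonneg _)]
  have := pow_le_pow_iff_left₀ (norm_nonneg ((EuclideanSpace.equiv n ℂ).symm (diagonal d *ᵥ ⇑x)))
    (by positivity : (0:ℝ) ≤ c * ‖x‖) (two_ne_zero)
  exact this.mp h2

lemma norm_one_kronecker_le (D : Matrix m m ℂ) : ‖(1 : Matrix n n ℂ) ⊗ₖ D‖ ≤ ‖D‖ := by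
  refine l2_opNorm_le_bound _ (norm_nonneg _) fun x => ?_
  have key : ∀ i p, (((1 : Matrix n n ℂ) ⊗ₖ D) *ᵥ ⇑x) (i, p)
      = (D *ᵥ fun q => x (i, q)) p := by
    intro i p
    simp [Matrix.mulVec, dotProduct, Fintype.sum_prod_type, Matrix.one_apply,
      kroneckerMap_apply, ite_mul, zero_mul, Finset.sum_ite_eq, Finset.sum_ite_eq']
  have h2 : ‖(EuclideanSpace.equiv (n × m) ℂ).symm (((1 : Matrix n n ℂ) ⊗ₖ D) *ᵥ ⇑x)‖ ^ 2
      ≤ (‖D‖ * ‖x‖) ^ 2 := by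
    rw [euclid_norm_sq]
    calc ∑ ip : n × m, ‖((((1 : Matrix n n ℂ) ⊗ₖ D) *ᵥ ⇑x)) ip‖ ^ 2
        = ∑ i, ∑ p, ‖(D *ᵥ fun q => x (i, q)) p‖ ^ 2 := by
          rw [Fintype.sum_prod_type]
          exact Finset.sum_congr rfl fun i _ => Finset.sum_congr rfl fun p _ => by rw [key]
      _ = ∑ i, ‖(EuclideanSpace.equiv m ℂ).symm (D *ᵥ fun q => x (i, q))‖ ^ 2 := by
          exact Finset.sum_congr rfl fun i _ => (euclid_norm_sq _).symm
      _ ≤ ∑ i, (‖D‖ * ‖(EuclideanSpace.equiv m ℂ).symm (fun q => x (i, q))‖) ^ 2 := by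
          refine Finset.sum_le_sum fun i _ => ?_
          refine pow_le_pow_left₀ (norm_nonneg _) ?_ 2
          exact Matrix.l2_opNorm_mulVec D ((EuclideanSpace.equiv m ℂ).symm (fun q => x (i, q)))
      _ = ‖D‖ ^ 2 * ∑ i, ∑ q, ‖x (i, q)‖ ^ 2 := by
          simp_rw [mul_pow, euclid_norm_sq, Finset.mul_sum]
      _ = (‖D‖ * ‖x‖) ^ 2 := by
          rw [mul_pow, EuclideanSpace.norm_eq,
            Real.sq_sqrt (Finset.sum_nonneg fun i _ => sq_nonneg _), Fintype.sum_prod_type]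
  exact (pow_le_pow_iff_left₀ (norm_nonneg _) (by positivity) two_ne_zero).mp h2

lemma norm_kronecker_one_le (C : Matrix n n ℂ) : ‖C ⊗ₖ (1 : Matrix m m ℂ)‖ ≤ ‖C‖ := by
  refine l2_opNorm_le_bound _ (norm_nonneg _) fun x => ?_
  have key : ∀ i p, ((C ⊗ₖ (1 : Matrix m m ℂ)) *ᵥ ⇑x) (i, p)
      = (C *ᵥ fun j => x (j, p)) i := by
    intro i p
    simp [Matrix.mulVec, dotProduct, Fintype.sum_prod_type, Matrix.one_apply,
      kroneckerMap_apply, mul_ite, mul_zero, Finset.sum_ite_eq, Finset.sum_ite_eq']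
  have h2 : ‖(EuclideanSpace.equiv (n × m) ℂ).symm ((C ⊗ₖ (1 : Matrix m m ℂ)) *ᵥ ⇑x)‖ ^ 2
      ≤ (‖C‖ * ‖x‖) ^ 2 := by
    rw [euclid_norm_sq]
    calc ∑ ip : n × m, ‖(((C ⊗ₖ (1 : Matrix m m ℂ)) *ᵥ ⇑x)) ip‖ ^ 2
        = ∑ p, ∑ i, ‖(C *ᵥ fun j => x (j, p)) i‖ ^ 2 := by
          rw [Fintype.sum_prod_type, Finset.sum_comm]
          exact Finset.sum_congr rfl fun p _ => Finset.sum_congr rfl fun i _ => by rw [key]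
      _ = ∑ p, ‖(EuclideanSpace.equiv n ℂ).symm (C *ᵥ fun j => x (j, p))‖ ^ 2 := by
          exact Finset.sum_congr rfl fun p _ => (euclid_norm_sq _).symm
      _ ≤ ∑ p, (‖C‖ * ‖(EuclideanSpace.equiv n ℂ).symm (fun j => x (j, p))‖) ^ 2 := by
          refine Finset.sum_le_sum fun p _ => ?_
          refine pow_le_pow_left₀ (norm_nonneg _) ?_ 2
          exact Matrix.l2_opNorm_mulVec C ((EuclideanSpace.equiv n ℂ).symm (fun j => x (j, p)))
      _ = ‖C‖ ^ 2 * ∑ p, ∑ j, ‖x (j, p)‖ ^ 2 := by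
          simp_rw [mul_pow, euclid_norm_sq, Finset.mul_sum]
      _ = (‖C‖ * ‖x‖) ^ 2 := by
          rw [mul_pow, EuclideanSpace.norm_eq,
            Real.sq_sqrt (Finset.sum_nonneg fun i _ => sq_nonneg _), Fintype.sum_prod_type,
            Finset.sum_comm]
  exact (pow_le_pow_iff_left₀ (norm_nonneg _) (by positivity) two_ne_zero).mp h2

lemma norm_kronecker_le (C : Matrix n n ℂ) (D : Matrix m m ℂ) : ‖C ⊗ₖ D‖ ≤ ‖C‖ * ‖D‖ := by
  have h : C ⊗ₖ D = (C ⊗ₖ (1 : Matrix m m ℂ)) * ((1 : Matrix n n ℂ) ⊗ₖ D) := by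
    rw [← Matrix.mul_kronecker_mul, mul_one, one_mul]
  rw [h]
  calc ‖(C ⊗ₖ (1 : Matrix m m ℂ)) * ((1 : Matrix n n ℂ) ⊗ₖ D)‖
      ≤ ‖C ⊗ₖ (1 : Matrix m m ℂ)‖ * ‖(1 : Matrix n n ℂ) ⊗ₖ D‖ := Matrix.l2_opNorm_mul _ _
    _ ≤ ‖C‖ * ‖D‖ := mul_le_mul (norm_kronecker_one_le C) (norm_one_kronecker_le D)
        (norm_nonneg _) (norm_nonneg _)

lemma spectral_psd {P : Matrix n n ℂ} (hP : P.PosSemidef) :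
    ∃ (V : Matrix n n ℂ) (d : n → ℝ), Vᴴ * V = 1 ∧ V * Vᴴ = 1 ∧ (∀ i, 0 ≤ d i) ∧
      P = V * diagonal (fun i => (d i : ℂ)) * Vᴴ ∧ P.trace.re = ∑ i, d i := by
  refine ⟨hP.1.eigenvectorUnitary, hP.1.eigenvalues, ?_, ?_, hP.eigenvalues_nonneg, ?_, ?_⟩
  · exact Matrix.mem_unitaryGroup_iff'.mp (hP.1.eigenvectorUnitary).2
  · exact Matrix.mem_unitaryGroup_iff.mp (hP.1.eigenvectorUnitary).2
  · exact hP.1.spectral_theorem.trans (Unitary.conjStarAlgAut_apply _ _)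
  · nth_rewrite 1 [hP.1.spectral_theorem]
    rw [Unitary.conjStarAlgAut_apply, Matrix.trace_mul_cycle, Matrix.mem_unitaryGroup_iff'.mp (hP.1.eigenvectorUnitary).2,
      one_mul, Matrix.trace_diagonal]
    simp

lemma exists_polar (M : Matrix n n ℂ) :
    ∃ W : Matrix n n ℂ, ‖W‖ ≤ 1 ∧ M = W * (posSemidef_conjTranspose_mul_self M).sqrt ∧
      Wᴴ * M = (posSemidef_conjTranspose_mul_self M).sqrt := by
  have hP := posSemidef_conjTranspose_mul_self M
  have hH : (Mᴴ * M).IsHermitian := hP.1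
  set V : Matrix n n ℂ := (hH.eigenvectorUnitary : Matrix n n ℂ) with hVdef
  set μ : n → ℝ := hH.eigenvalues with hμdef
  have hμ0 : ∀ i, 0 ≤ μ i := hP.eigenvalues_nonneg
  have hV1 : Vᴴ * V = 1 := Matrix.mem_unitaryGroup_iff'.mp hH.eigenvectorUnitary.2
  have hV2 : V * Vᴴ = 1 := Matrix.mem_unitaryGroup_iff.mp hH.eigenvectorUnitary.2
  have hspec : Mᴴ * M = V * diagonal (fun i => (μ i : ℂ)) * Vᴴ := hH.spectral_theorem.trans (Unitary.conjStarAlgAut_apply _ _)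
  have hsqrt : (posSemidef_conjTranspose_mul_self M).sqrt
      = V * diagonal (fun i => ((Real.sqrt (μ i) : ℝ) : ℂ)) * Vᴴ := rfl
  have hmul : ∀ a b : n → ℂ, (V * diagonal a * Vᴴ) * (V * diagonal b * Vᴴ)
      = V * diagonal (fun i => a i * b i) * Vᴴ := by
    intro a b
    have h1 : Vᴴ * (V * diagonal b * Vᴴ) = diagonal b * Vᴴ := by
      rw [← Matrix.mul_assoc, ← Matrix.mul_assoc, hV1, one_mul]
    calc (V * diagonal a * Vᴴ) * (V * diagonal b * Vᴴ)
        = V * diagonal a * (Vᴴ * (V * diagonal b * Vᴴ)) := by rw [Matrix.mul_assoc]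
      _ = V * diagonal a * (diagonal b * Vᴴ) := by rw [h1]
      _ = V * (diagonal a * diagonal b) * Vᴴ := by simp only [Matrix.mul_assoc]
      _ = V * diagonal (fun i => a i * b i) * Vᴴ := by rw [diagonal_mul_diagonal]
  have hconj : ∀ r : n → ℝ, (V * diagonal (fun i => (r i : ℂ)) * Vᴴ)ᴴ
      = V * diagonal (fun i => (r i : ℂ)) * Vᴴ := by
    intro r
    rw [conjTranspose_mul, conjTranspose_mul, conjTranspose_conjTranspose,
      diagonal_conjTranspose]
    have : star (fun i => ((r i : ℂ))) = fun i => ((r i : ℂ)) := by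
      funext i; simp [Pi.star_apply, Complex.conj_ofReal]
    rw [this, Matrix.mul_assoc]
  -- the "pseudo-inverse of sqrt" function
  set g : n → ℝ := fun i => if μ i = 0 then 0 else (Real.sqrt (μ i))⁻¹ with hgdef
  set T : Matrix n n ℂ := V * diagonal (fun i => (g i : ℂ)) * Vᴴ with hTdef
  have hTH : Tᴴ = T := hconj g
  -- key pointwise computations
  have hgμ : ∀ i, (g i : ℂ) * (μ i : ℂ) = ((Real.sqrt (μ i) : ℝ) : ℂ) := by
    intro i
    by_cases h : μ i = 0
    · simp [hgdef, h]
    · have hpos : 0 < μ i := lt_of_le_of_ne (hμ0 i) (Ne.symm h)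
      have hs : Real.sqrt (μ i) ≠ 0 := by positivity
      rw [hgdef]
      simp only [h, if_neg, ite_false]
      rw [← Complex.ofReal_mul]
      congr 1
      field_simp
      exact (Real.sq_sqrt (hμ0 i)).symm
  have hgsμ : ∀ i, (g i : ℂ) * ((Real.sqrt (μ i) : ℝ) : ℂ)
      = if μ i = 0 then 0 else 1 := by
    intro i
    by_cases h : μ i = 0
    · simp [hgdef, h]
    · have hpos : 0 < μ i := lt_of_le_of_ne (hμ0 i) (Ne.symm h)
      have hs : Real.sqrt (μ i) ≠ 0 := by positivity
      rw [hgdef]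
      simp only [h, if_neg, ite_false]
      rw [← Complex.ofReal_mul, inv_mul_cancel₀ hs, Complex.ofReal_one]
  refine ⟨M * T, ?_, ?_, ?_⟩
  · -- norm bound
    have hWW : (M * T)ᴴ * (M * T) = V * diagonal (fun i => ((if μ i = 0 then 0 else 1 : ℂ))) * Vᴴ := by
      calc (M * T)ᴴ * (M * T) = Tᴴ * (Mᴴ * M) * T := by
            rw [conjTranspose_mul]; simp only [Matrix.mul_assoc]
        _ = T * (V * diagonal (fun i => (μ i : ℂ)) * Vᴴ) * T := by rw [hTH, hspec]
        _ = (V * diagonal (fun i => (g i : ℂ) * (μ i : ℂ)) * Vᴴ) * T := by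
            rw [hTdef, hmul]
        _ = V * diagonal (fun i => (g i : ℂ) * (μ i : ℂ) * (g i : ℂ)) * Vᴴ := by
            rw [hTdef, hmul]
        _ = _ := by
            have hf : (fun i => (g i : ℂ) * (μ i : ℂ) * (g i : ℂ))
                = fun i => ((if μ i = 0 then 0 else 1 : ℂ)) := by
              funext i; rw [hgμ i, mul_comm, hgsμ i]
            rw [hf]
    have h1 : ‖(M * T)ᴴ * (M * T)‖ ≤ 1 := by
      rw [hWW]
      calc ‖V * diagonal (fun i => ((if μ i = 0 then 0 else 1 : ℂ))) * Vᴴ‖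
          ≤ ‖V * diagonal (fun i => ((if μ i = 0 then 0 else 1 : ℂ)))‖ * ‖Vᴴ‖ :=
            Matrix.l2_opNorm_mul _ _
        _ ≤ (‖V‖ * ‖diagonal (fun i => ((if μ i = 0 then 0 else 1 : ℂ)))‖) * ‖Vᴴ‖ := by
            refine mul_le_mul_of_nonneg_right (Matrix.l2_opNorm_mul _ _) (norm_nonneg _)
        _ ≤ (1 * 1) * 1 := by
            refine mul_le_mul ?_ ?_ (norm_nonneg _) (by norm_num)
            · refine mul_le_mul (norm_le_one_of_unitary hV1) ?_ (norm_nonneg _) zero_le_one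
              refine norm_diagonal_le _ zero_le_one fun i => ?_
              by_cases h : μ i = 0 <;> simp [h]
            · refine norm_le_one_of_unitary ?_
              rw [conjTranspose_conjTranspose, hV2]
        _ = 1 := by norm_num
    have h2 : ‖M * T‖ * ‖M * T‖ = ‖(M * T)ᴴ * (M * T)‖ :=
      (Matrix.l2_opNorm_conjTranspose_mul_self _).symm
    nlinarith [norm_nonneg (M * T)]
  · -- M = (M*T) * sqrt
    rw [hsqrt]
    have hTS : T * (V * diagonal (fun i => ((Real.sqrt (μ i) : ℝ) : ℂ)) * Vᴴ)
        = V * diagonal (fun i => ((if μ i = 0 then 0 else 1 : ℂ))) * Vᴴ := by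
      rw [hTdef, hmul]
      have hf : (fun i => (g i : ℂ) * ((Real.sqrt (μ i) : ℝ) : ℂ))
          = fun i => ((if μ i = 0 then 0 else 1 : ℂ)) := funext fun i => hgsμ i
      rw [hf]
    rw [Matrix.mul_assoc, hTS]
    -- show M * (V * diag χ * Vᴴ) = M
    have he : V * diagonal (fun i => ((if μ i = 0 then 0 else 1 : ℂ))) * Vᴴ
        = 1 - V * diagonal (fun i => ((if μ i = 0 then 1 else 0 : ℂ))) * Vᴴ := by
      have : diagonal (fun i => ((if μ i = 0 then 0 else 1 : ℂ)))
          = 1 - diagonal (fun i => ((if μ i = 0 then 1 else 0 : ℂ))) := by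
        ext i j
        rw [Matrix.sub_apply]
        by_cases hij : i = j
        · subst hij
          by_cases h : μ i = 0 <;>
            simp [Matrix.diagonal_apply_eq, Matrix.one_apply_eq, h]
        · rw [Matrix.diagonal_apply_ne _ hij, Matrix.diagonal_apply_ne _ hij,
            Matrix.one_apply_ne hij, sub_zero]
      rw [this, Matrix.mul_sub, Matrix.sub_mul, Matrix.mul_one, hV2]
    have hMQ : M * (V * diagonal (fun i => ((if μ i = 0 then 1 else 0 : ℂ))) * Vᴴ) = 0 := by
      set Q : Matrix n n ℂ := V * diagonal (fun i => ((if μ i = 0 then 1 else 0 : ℂ))) * Vᴴ with hQdef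
      have hQH : Qᴴ = Q := by
        have hf : (fun i => ((if μ i = 0 then 1 else 0 : ℂ)))
            = fun i => (((if μ i = 0 then 1 else 0 : ℝ) : ℂ)) := by
          funext i; by_cases h : μ i = 0 <;> simp [h]
        rw [hQdef, hf]
        exact hconj _
      have key : (M * Q)ᴴ * (M * Q) = 0 := by
        calc (M * Q)ᴴ * (M * Q) = Qᴴ * (Mᴴ * M) * Q := by
              rw [conjTranspose_mul]; simp only [Matrix.mul_assoc]
          _ = Q * (V * diagonal (fun i => (μ i : ℂ)) * Vᴴ) * Q := by rw [hQH, hspec]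
          _ = (V * diagonal (fun i => ((if μ i = 0 then 1 else 0 : ℂ)) * (μ i : ℂ)) * Vᴴ) * Q := by
              rw [hQdef, hmul]
          _ = V * diagonal (fun i => ((if μ i = 0 then 1 else 0 : ℂ)) * (μ i : ℂ) * ((if μ i = 0 then 1 else 0 : ℂ))) * Vᴴ := by
              rw [hQdef, hmul]
          _ = V * diagonal (fun _ => (0 : ℂ)) * Vᴴ := by
              have hf : (fun i => ((if μ i = 0 then 1 else 0 : ℂ)) * (μ i : ℂ) * ((if μ i = 0 then 1 else 0 : ℂ)))
                  = fun _ => (0 : ℂ) := by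
                funext i; by_cases h : μ i = 0 <;> simp [h]
              rw [hf]
          _ = 0 := by
              rw [diagonal_zero]  -- diagonal (fun _ => 0) = 0?
              simp
      exact conjTranspose_mul_self_eq_zero.mp key
    rw [he, Matrix.mul_sub, Matrix.mul_one, hMQ, sub_zero]
  · -- Wᴴ M = sqrt
    rw [hsqrt]
    calc (M * T)ᴴ * M = Tᴴ * (Mᴴ * M) := by rw [conjTranspose_mul, Matrix.mul_assoc]
      _ = T * (V * diagonal (fun i => (μ i : ℂ)) * Vᴴ) := by rw [hTH, hspec]
      _ = V * diagonal (fun i => (g i : ℂ) * (μ i : ℂ)) * Vᴴ := by rw [hTdef, hmul]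
      _ = V * diagonal (fun i => ((Real.sqrt (μ i) : ℝ) : ℂ)) * Vᴴ := by
          have hf : (fun i => (g i : ℂ) * (μ i : ℂ))
              = fun i => ((Real.sqrt (μ i) : ℝ) : ℂ) := funext fun i => hgμ i
          rw [hf]

lemma traceNorm_eq_sum (M : Matrix n n ℂ) :
    ∃ d : n → ℝ, (∀ i, 0 ≤ d i) ∧ traceNorm M = ∑ i, d i := by
  obtain ⟨V, d, _, _, hd, _, htr⟩ :=
    spectral_psd (Matrix.PosSemidef.posSemidef_sqrt (posSemidef_conjTranspose_mul_self M))
  exact ⟨d, hd, htr⟩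

lemma traceNorm_nonneg (M : Matrix n n ℂ) : 0 ≤ traceNorm M := by
  obtain ⟨d, hd, htr⟩ := traceNorm_eq_sum M
  rw [htr]
  exact Finset.sum_nonneg fun i _ => hd i

lemma traceNorm_psd {P : Matrix n n ℂ} (hP : P.PosSemidef) : traceNorm P = P.trace.re := by
  have h : P = (posSemidef_conjTranspose_mul_self P).sqrt := by
    refine hP.eq_sqrt_of_sq_eq _ ?_
    rw [pow_two, hP.1]
  show ((posSemidef_conjTranspose_mul_self P).sqrt.trace).re = P.trace.re
  rw [← h]

lemma trace_mul_le (C M : Matrix n n ℂ) : ‖(C * M).trace‖ ≤ ‖C‖ * traceNorm M := by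
  obtain ⟨W, hW, hM, hWM⟩ := exists_polar M
  obtain ⟨V, d, hV1, hV2, hd, hPeq, htr⟩ :=
    spectral_psd (Matrix.PosSemidef.posSemidef_sqrt (posSemidef_conjTranspose_mul_self M))
  have htn : traceNorm M = ∑ i, d i := htr
  have hVH : ‖Vᴴ‖ ≤ 1 := by
    refine norm_le_one_of_unitary ?_
    rw [conjTranspose_conjTranspose, hV2]
  have hV : ‖V‖ ≤ 1 := norm_le_one_of_unitary hV1
  have hW1 : 0 ≤ ‖C‖ := norm_nonneg _
  have hE : ‖Vᴴ * C * W * V‖ ≤ ‖C‖ := by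
    calc ‖Vᴴ * C * W * V‖ ≤ ‖Vᴴ * C * W‖ * ‖V‖ := Matrix.l2_opNorm_mul _ _
      _ ≤ (‖Vᴴ * C‖ * ‖W‖) * ‖V‖ := by
          exact mul_le_mul_of_nonneg_right (Matrix.l2_opNorm_mul _ _) (norm_nonneg _)
      _ ≤ ((‖Vᴴ‖ * ‖C‖) * ‖W‖) * ‖V‖ := by
          refine mul_le_mul_of_nonneg_right (mul_le_mul_of_nonneg_right
            (Matrix.l2_opNorm_mul _ _) (norm_nonneg _)) (norm_nonneg _)
      _ ≤ ((1 * ‖C‖) * 1) * 1 := by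
          refine mul_le_mul (mul_le_mul (mul_le_mul_of_nonneg_right hVH hW1) hW
            (norm_nonneg _) (by positivity)) hV (norm_nonneg _) (by positivity)
      _ = ‖C‖ := by ring
  have h1 : (C * M).trace = ∑ i, (Vᴴ * C * W * V) i i * (d i : ℂ) := by
    rw [hM, hPeq]
    have e1 : C * (W * (V * diagonal (fun i => (d i : ℂ)) * Vᴴ))
        = (C * W * V * diagonal (fun i => (d i : ℂ))) * Vᴴ := by
      simp only [Matrix.mul_assoc]
    rw [e1, Matrix.trace_mul_comm]
    have e2 : Vᴴ * (C * W * V * diagonal (fun i => (d i : ℂ)))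
        = (Vᴴ * C * W * V) * diagonal (fun i => (d i : ℂ)) := by
      simp only [Matrix.mul_assoc]
    rw [e2, Matrix.trace]
    refine Finset.sum_congr rfl fun i _ => ?_
    simp [Matrix.diag, Matrix.mul_diagonal]
  rw [h1, htn]
  calc ‖∑ i, (Vᴴ * C * W * V) i i * (d i : ℂ)‖
      ≤ ∑ i, ‖(Vᴴ * C * W * V) i i * (d i : ℂ)‖ := norm_sum_le _ _
    _ ≤ ∑ i, ‖C‖ * d i := by
        refine Finset.sum_le_sum fun i _ => ?_
        rw [norm_mul, Complex.norm_real, Real.norm_of_nonneg (hd i)]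
        exact mul_le_mul_of_nonneg_right ((norm_entry_le _ i i).trans hE) (hd i)
    _ = ‖C‖ * ∑ i, d i := by rw [Finset.mul_sum]

lemma traceNorm_mul_le (C M : Matrix n n ℂ) : traceNorm (C * M) ≤ ‖C‖ * traceNorm M := by
  obtain ⟨W, hW, _, hWM⟩ := exists_polar (C * M)
  have h1 : traceNorm (C * M) = ((Wᴴ * (C * M)).trace).re := by rw [hWM]; rfl
  calc traceNorm (C * M) = ((Wᴴ * C * M).trace).re := by rw [h1, Matrix.mul_assoc]
    _ ≤ ‖((Wᴴ * C) * M).trace‖ := Complex.re_le_norm _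
    _ ≤ ‖Wᴴ * C‖ * traceNorm M := trace_mul_le _ _
    _ ≤ (1 * ‖C‖) * traceNorm M := by
        refine mul_le_mul_of_nonneg_right ?_ (traceNorm_nonneg M)
        refine (Matrix.l2_opNorm_mul _ _).trans ?_
        refine mul_le_mul_of_nonneg_right ?_ (norm_nonneg _)
        rw [Matrix.l2_opNorm_conjTranspose]
        exact hW
    _ = ‖C‖ * traceNorm M := by ring

/-- partial trace over the first tensor factor -/
noncomputable def ptrace (X : Matrix (n × m) (n × m) ℂ) : Matrix m m ℂ :=
  Matrix.of fun p q => ∑ j, X (j, p) (j, q)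

lemma trace_one_kron_mul (U : Matrix m m ℂ) (X : Matrix (n × m) (n × m) ℂ) :
    (U * ptrace X).trace = (((1 : Matrix n n ℂ) ⊗ₖ U) * X).trace := by
  simp only [Matrix.trace, Matrix.diag, Matrix.mul_apply, ptrace, Matrix.of_apply,
    Fintype.sum_prod_type, Matrix.one_apply, kroneckerMap_apply, ite_mul, zero_mul, one_mul,
    Finset.sum_ite_eq, Finset.sum_ite_eq', Finset.mem_univ, if_true, Finset.mul_sum,
    Finset.sum_mul]
  have key : ∀ x : n, (∑ x1 : m, ∑ x2 : n, ∑ x3 : m,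
      (if x = x2 then U x1 x3 * X (x2, x3) (x, x1) else 0))
      = ∑ x1 : m, ∑ x3 : m, U x1 x3 * X (x, x3) (x, x1) := by
    intro x
    refine Finset.sum_congr rfl fun x1 _ => ?_
    rw [Finset.sum_comm]
    refine Finset.sum_congr rfl fun x3 _ => ?_
    simp [Finset.sum_ite_eq]
  simp_rw [key]
  exact (Finset.sum_congr rfl fun y _ => Finset.sum_comm).trans Finset.sum_comm

lemma traceNorm_ptrace_le (X : Matrix (n × m) (n × m) ℂ) :
    traceNorm (ptrace X) ≤ traceNorm X := by
  obtain ⟨W, hW, _, hWM⟩ := exists_polar (ptrace X)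
  have h1 : traceNorm (ptrace X) = ((Wᴴ * ptrace X).trace).re := by rw [hWM]; rfl
  calc traceNorm (ptrace X) = ((((1 : Matrix n n ℂ) ⊗ₖ Wᴴ) * X).trace).re := by
        rw [h1, trace_one_kron_mul]
    _ ≤ ‖(((1 : Matrix n n ℂ) ⊗ₖ Wᴴ) * X).trace‖ := Complex.re_le_norm _
    _ ≤ ‖(1 : Matrix n n ℂ) ⊗ₖ Wᴴ‖ * traceNorm X := trace_mul_le _ _
    _ ≤ 1 * traceNorm X := by
        refine mul_le_mul_of_nonneg_right ?_ (traceNorm_nonneg _)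
        refine (norm_one_kronecker_le _).trans ?_
        rw [Matrix.l2_opNorm_conjTranspose]
        exact hW
    _ = traceNorm X := one_mul _

lemma kron_conjTranspose (A : Matrix n n ℂ) (B : Matrix m m ℂ) :
    (A ⊗ₖ B)ᴴ = Aᴴ ⊗ₖ Bᴴ := by
  ext ⟨i, p⟩ ⟨j, q⟩
  simp [Matrix.conjTranspose_apply, kroneckerMap_apply, mul_comm]

lemma posSemidef_kron {P : Matrix n n ℂ} {Q : Matrix m m ℂ}
    (hP : P.PosSemidef) (hQ : Q.PosSemidef) : (P ⊗ₖ Q).PosSemidef := by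
  have h : P ⊗ₖ Q = (hP.sqrt ⊗ₖ hQ.sqrt)ᴴ * (hP.sqrt ⊗ₖ hQ.sqrt) := by
    rw [kron_conjTranspose, ← Matrix.mul_kronecker_mul, hP.posSemidef_sqrt.1,
      hQ.posSemidef_sqrt.1, hP.sqrt_mul_self, hQ.sqrt_mul_self]
  rw [h]
  exact posSemidef_conjTranspose_mul_self _

lemma trace_im_zero {P : Matrix n n ℂ} (hH : P.IsHermitian) : (P.trace).im = 0 := by
  have h : star P.trace = P.trace := by
    rw [← Matrix.trace_conjTranspose, hH.eq]
  exact Complex.conj_eq_iff_im.mp h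

lemma traceNorm_kron_le (A : Matrix n n ℂ) (Y : Matrix m m ℂ) :
    traceNorm (A ⊗ₖ Y) ≤ traceNorm A * traceNorm Y := by
  obtain ⟨WA, hWA, hA, _⟩ := exists_polar A
  obtain ⟨WY, hWY, hY, _⟩ := exists_polar Y
  have hPA := (posSemidef_conjTranspose_mul_self A).posSemidef_sqrt
  have hPY := (posSemidef_conjTranspose_mul_self Y).posSemidef_sqrt
  have h1 : A ⊗ₖ Y = (WA ⊗ₖ WY) * ((posSemidef_conjTranspose_mul_self A).sqrt
      ⊗ₖ (posSemidef_conjTranspose_mul_self Y).sqrt) := by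
    rw [← Matrix.mul_kronecker_mul, ← hA, ← hY]
  calc traceNorm (A ⊗ₖ Y)
      ≤ ‖WA ⊗ₖ WY‖ * traceNorm ((posSemidef_conjTranspose_mul_self A).sqrt
          ⊗ₖ (posSemidef_conjTranspose_mul_self Y).sqrt) := by
        rw [h1]; exact traceNorm_mul_le _ _
    _ ≤ 1 * traceNorm ((posSemidef_conjTranspose_mul_self A).sqrt
          ⊗ₖ (posSemidef_conjTranspose_mul_self Y).sqrt) := by
        refine mul_le_mul_of_nonneg_right ?_ (traceNorm_nonneg _)
        refine (norm_kronecker_le _ _).trans ?_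
        exact mul_le_one₀ hWA (norm_nonneg _) hWY
    _ = traceNorm A * traceNorm Y := by
        rw [one_mul, traceNorm_psd (posSemidef_kron hPA hPY), Matrix.trace_kronecker,
          Complex.mul_re, trace_im_zero hPA.1, trace_im_zero hPY.1]
        show _ * _ - 0 * 0 = traceNorm A * traceNorm Y
        rw [mul_zero, sub_zero]
        rfl

lemma traceNorm_zero : traceNorm (0 : Matrix n n ℂ) = 0 := by
  rw [traceNorm_psd Matrix.PosSemidef.zero]
  simp

end DiamondAux

open scoped Kronecker Matrix.Norms.L2Operator in
open Matrix DiamondAux in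
/-- For the rank-one superoperator `Φ(X) = tr(Bᴴ X) • A`, the diamond norm is
bounded by `‖A‖₁ · ‖B‖_∞`. -/
theorem stmt_11 {n : Type*} [Fintype n] [DecidableEq n] (A B : Matrix n n ℂ) :
    diamondNorm
        (((Matrix.traceLinearMap n ℂ ℂ).comp
            (LinearMap.mulLeft ℂ B.conjTranspose)).smulRight A)
      ≤ traceNorm A * specNorm B := by
  classical
  set Φ := ((Matrix.traceLinearMap n ℂ ℂ).comp
      (LinearMap.mulLeft ℂ B.conjTranspose)).smulRight A with hΦ
  haveI : Nonempty {X : Matrix (n × n) (n × n) ℂ // traceNorm X ≤ 1} :=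
    ⟨⟨0, by rw [traceNorm_zero]; exact zero_le_one⟩⟩
  refine ciSup_le ?_
  rintro ⟨X, hX⟩
  have hext : extTensor Φ X = A ⊗ₖ ptrace ((Bᴴ ⊗ₖ (1 : Matrix n n ℂ)) * X) := by
    ext ⟨p1, p2⟩ ⟨q1, q2⟩
    show (Φ (Matrix.of fun i j => X (i, p2) (j, q2))) p1 q1 = _
    simp only [hΦ, LinearMap.smulRight_apply, LinearMap.comp_apply,
      Matrix.traceLinearMap_apply, LinearMap.mulLeft_apply, Matrix.smul_apply, smul_eq_mul,
      kroneckerMap_apply, ptrace, Matrix.of_apply]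
    rw [mul_comm]
    congr 1
    rw [Matrix.trace]
    simp only [Matrix.diag, Matrix.mul_apply, Matrix.of_apply, Fintype.sum_prod_type,
      Matrix.one_apply, kroneckerMap_apply, mul_ite, mul_zero, mul_one, ite_mul, zero_mul,
      Finset.sum_ite_eq, Finset.sum_ite_eq', Finset.mem_univ, if_true]
  rw [hext]
  have h1 : traceNorm (ptrace ((Bᴴ ⊗ₖ (1 : Matrix n n ℂ)) * X)) ≤ specNorm B := by
    calc traceNorm (ptrace ((Bᴴ ⊗ₖ (1 : Matrix n n ℂ)) * X))
        ≤ traceNorm ((Bᴴ ⊗ₖ (1 : Matrix n n ℂ)) * X) := traceNorm_ptrace_le _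
      _ ≤ ‖Bᴴ ⊗ₖ (1 : Matrix n n ℂ)‖ * traceNorm X := traceNorm_mul_le _ _
      _ ≤ ‖Bᴴ‖ * 1 := mul_le_mul (norm_kronecker_one_le _) hX (traceNorm_nonneg _)
          (norm_nonneg _)
      _ = specNorm B := by rw [mul_one, Matrix.l2_opNorm_conjTranspose]; rfl
  calc traceNorm (A ⊗ₖ ptrace ((Bᴴ ⊗ₖ (1 : Matrix n n ℂ)) * X))
      ≤ traceNorm A * traceNorm (ptrace ((Bᴴ ⊗ₖ (1 : Matrix n n ℂ)) * X)) :=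
        traceNorm_kron_le _ _
    _ ≤ traceNorm A * specNorm B := mul_le_mul_of_nonneg_left h1 (traceNorm_nonneg _)
end

section
/- Let x, y be random variables on a finite probability space taking values in F_2^t, and suppose there is a measure-preserving involution mapping (x,y) to (x+n, y) for a fixed n ∈ F_2^t such that Pr[h(x) = h(x+n)] ≤ 3/4. Then Pr[h(x) = h(y)] ≤ 7/8. -/
open Finset

/-- Let `x, y` be random variables on a finite probability space with values in
`F₂^t`, and suppose that for a fixed `n ∈ F₂^t` the pair `(x+n, y)` has the same
joint distribution as `(x, y)`, and `Pr[h(x) = h(x+n)] ≤ 3/4`.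
Then `Pr[h(x) = h(y)] ≤ 7/8`. -/
theorem stmt_18 {Ω : Type*} [Fintype Ω] (p : Ω → ℝ)
    (hp : ∀ ω, 0 ≤ p ω) (hsum : ∑ ω, p ω = 1)
    (t : ℕ) (x y : Ω → (Fin t → ZMod 2)) (n : Fin t → ZMod 2)
    (hinv : ∀ a b : Fin t → ZMod 2,
      ∑ ω ∈ univ.filter (fun ω => x ω = a ∧ y ω = b), p ω
        = ∑ ω ∈ univ.filter (fun ω => x ω + n = a ∧ y ω = b), p ω)
    (h34 : ∑ ω ∈ univ.filter
        (fun ω => hammingNorm (x ω) = hammingNorm (x ω + n)), p ω ≤ 3 / 4) :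
    ∑ ω ∈ univ.filter
        (fun ω => hammingNorm (x ω) = hammingNorm (y ω)), p ω ≤ 7 / 8 := by
  classical
  -- key: (x+n, y) has same distribution as (x, y), applied to any event
  have key : ∀ s : Finset ((Fin t → ZMod 2) × (Fin t → ZMod 2)),
      ∑ ω ∈ univ.filter (fun ω => (x ω, y ω) ∈ s), p ω
        = ∑ ω ∈ univ.filter (fun ω => (x ω + n, y ω) ∈ s), p ω := by
    intro s
    rw [← Finset.sum_fiberwise_eq_sum_filter univ s (fun ω => (x ω, y ω)) p,
        ← Finset.sum_fiberwise_eq_sum_filter univ s (fun ω => (x ω + n, y ω)) p]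
    refine Finset.sum_congr rfl fun ab _ => ?_
    simpa [Prod.ext_iff] using hinv ab.1 ab.2
  set A : Finset Ω := univ.filter
      (fun ω => hammingNorm (x ω) ≠ hammingNorm (y ω)) with hAdef
  set B : Finset Ω := univ.filter
      (fun ω => hammingNorm (x ω + n) ≠ hammingNorm (y ω)) with hBdef
  have hAB : ∑ ω ∈ A, p ω = ∑ ω ∈ B, p ω := by
    have := key (univ.filter (fun ab : (Fin t → ZMod 2) × (Fin t → ZMod 2) =>
      hammingNorm ab.1 ≠ hammingNorm ab.2))
    simpa [hAdef, hBdef] using this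
  -- the event h(x) ≠ h(x+n) is contained in A ∪ B
  have hsub : univ.filter (fun ω => hammingNorm (x ω) ≠ hammingNorm (x ω + n))
      ⊆ A ∪ B := by
    intro ω hω
    simp only [Finset.mem_filter, Finset.mem_univ, true_and] at hω
    simp only [Finset.mem_union, hAdef, hBdef, Finset.mem_filter, Finset.mem_univ,
      true_and]
    by_contra hc
    push_neg at hc
    exact hω (hc.1.trans hc.2.symm)
  -- Pr[h(x) ≠ h(x+n)] ≥ 1/4
  have hcompl : ∑ ω ∈ univ.filter (fun ω => hammingNorm (x ω) = hammingNorm (x ω + n)), p ω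
      + ∑ ω ∈ univ.filter (fun ω => ¬ hammingNorm (x ω) = hammingNorm (x ω + n)), p ω = 1 := by
    rw [Finset.sum_filter_add_sum_filter_not]; exact hsum
  have h14 : (1 : ℝ) / 4 ≤ ∑ ω ∈ univ.filter
      (fun ω => hammingNorm (x ω) ≠ hammingNorm (x ω + n)), p ω := by
    have : ∑ ω ∈ univ.filter (fun ω => ¬ hammingNorm (x ω) = hammingNorm (x ω + n)), p ω
        = 1 - ∑ ω ∈ univ.filter (fun ω => hammingNorm (x ω) = hammingNorm (x ω + n)), p ω := by
      linarith [hcompl]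
    show (1:ℝ)/4 ≤ ∑ ω ∈ univ.filter
      (fun ω => ¬ hammingNorm (x ω) = hammingNorm (x ω + n)), p ω
    linarith
  have hmono : ∑ ω ∈ univ.filter
      (fun ω => hammingNorm (x ω) ≠ hammingNorm (x ω + n)), p ω ≤ ∑ ω ∈ A ∪ B, p ω :=
    Finset.sum_le_sum_of_subset_of_nonneg hsub (fun ω _ _ => hp ω)
  have hunion : ∑ ω ∈ A ∪ B, p ω ≤ ∑ ω ∈ A, p ω + ∑ ω ∈ B, p ω := by
    have h := Finset.sum_union_inter (s₁ := A) (s₂ := B) (f := p)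
    have hnn : 0 ≤ ∑ ω ∈ A ∩ B, p ω := Finset.sum_nonneg fun ω _ => hp ω
    linarith
  have hA18 : (1 : ℝ) / 8 ≤ ∑ ω ∈ A, p ω := by linarith
  have hgoal : ∑ ω ∈ univ.filter
      (fun ω => hammingNorm (x ω) = hammingNorm (y ω)), p ω + ∑ ω ∈ A, p ω = 1 := by
    rw [hAdef]
    rw [Finset.sum_filter_add_sum_filter_not]
    exact hsum
  linarith
end
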